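/- (Characterization theorem) Let A ≪ B in 𝕀ℝ and let F : 𝕀_{[A,B]} → 𝕀ℝ be continuous with respect to the Moore metric d_M. Then F is integrable, i.e., ∫̲_A^B F(X)dX = ∫̄_A^B F(X)dX, and the common value satisfies ∫_A^B F(X)dX = [∫_{a̲}^{b̲} F_l(x)dx, ∫_{a̲}^{b̲} F_r(x)dx] · (d_M(A,B)/(b̲−a̲)), where F_l(x) = π₁ F([x, ā + ((b̄−ā)/(b̲−a̲))(x−a̲)]) and F_r(x) = π₂ F([x, ā + ((b̄−ā)/(b̲−a̲))(x−a̲)]). -/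

import Mathlib

/-- `𝕀ℝ`: the set of nonempty closed bounded real intervals, identified with
pairs `(lo, hi) ∈ ℝ × ℝ` with `lo ≤ hi`.  The subtype order inherited from the
product order on `ℝ × ℝ` is exactly the Kulisch–Miranker order, and the
inherited metric (sup metric of `ℝ × ℝ`) is exactly the Moore metric `d_M`. -/
abbrev IR : Type := {p : ℝ × ℝ // p.1 ≤ p.2}

namespace IR

/-- Left endpoint projection `π₁`. -/
def lo (A : IR) : ℝ := A.val.1

/-- Right endpoint projection `π₂`. -/
def hi (A : IR) : ℝ := A.val.2

/-- The strict Kulisch–Miranker order `A ≪ B`. -/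
def sll (A B : IR) : Prop := lo A < lo B ∧ hi A < hi B

/-- The Moore metric `d_M`. -/
noncomputable def dM (A B : IR) : ℝ := max |lo B - lo A| |hi B - hi A|

/-- `𝕀_{[A,B]} = {X ∈ 𝕀ℝ : A ≤ X ≤ B}`. -/
def box (A B : IR) : Set IR := {X : IR | A ≤ X ∧ X ≤ B}

/-- The interval `[u,v]` (with a junk degenerate value if `u > v`). -/
noncomputable def mkI (u v : ℝ) : IR := if h : u ≤ v then ⟨(u, v), h⟩ else ⟨(u, u), le_rfl⟩

/-- The point `A + t(B - A)` on the segment from `A` to `B`. -/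
noncomputable def seg (A B : IR) (t : ℝ) : IR :=
  mkI (lo A + t * (lo B - lo A)) (hi A + t * (hi B - hi A))

/-- Componentwise infimum of a set of intervals, as a pair of reals. -/
noncomputable def infS (S : Set IR) : ℝ × ℝ := (sInf (lo '' S), sInf (hi '' S))

/-- Componentwise supremum of a set of intervals, as a pair of reals. -/
noncomputable def supS (S : Set IR) : ℝ × ℝ := (sSup (lo '' S), sSup (hi '' S))

/-- A partition `A = P₀ ≪ P₁ ≪ ⋯ ≪ P_N = B` of `𝕀_{[A,B]}`, described by its
parameters `0 = t₀ < t₁ < ⋯ < t_N = 1` (so that `P_k = A + t_k (B - A)`). -/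
structure Partition where
  n : ℕ
  npos : 0 < n
  t : ℕ → ℝ
  t0 : t 0 = 0
  tn : t n = 1
  mono : ∀ i < n, t i < t (i + 1)

/-- The set of parameters of a partition. -/
def Partition.pts (P : Partition) : Set ℝ := P.t '' Set.Iic P.n

/-- The set of points `P_k = A + t_k(B-A)` of a partition of `𝕀_{[A,B]}`. -/
noncomputable def Partition.ipts (A B : IR) (P : Partition) : Set IR :=
  (fun i => seg A B (P.t i)) '' Set.Iic P.n

/-- Lower Riemann sum `σ(F, 𝒫)` (as a pair of reals; interval sums are
componentwise and `λ • [u,v] = [λu, λv]` for the scalars `λ = d_M ≥ 0`). -/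
noncomputable def lowerSum (A B : IR) (F : IR → IR) (P : Partition) : ℝ × ℝ :=
  ∑ k ∈ Finset.range P.n,
    dM (seg A B (P.t k)) (seg A B (P.t (k + 1))) •
      infS (F '' box (seg A B (P.t k)) (seg A B (P.t (k + 1))))

/-- Upper Riemann sum `Σ(F, 𝒫)`. -/
noncomputable def upperSum (A B : IR) (F : IR → IR) (P : Partition) : ℝ × ℝ :=
  ∑ k ∈ Finset.range P.n,
    dM (seg A B (P.t k)) (seg A B (P.t (k + 1))) •
      supS (F '' box (seg A B (P.t k)) (seg A B (P.t (k + 1))))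

/-- The lower integral `∫̲_A^B F(X)dX`: componentwise supremum of the lower
Riemann sums over all partitions. -/
noncomputable def lowerInt (A B : IR) (F : IR → IR) : ℝ × ℝ :=
  (sSup (Set.range fun P : Partition => (lowerSum A B F P).1),
   sSup (Set.range fun P : Partition => (lowerSum A B F P).2))

/-- The upper integral `∫̄_A^B F(X)dX`: componentwise infimum of the upper
Riemann sums over all partitions. -/
noncomputable def upperInt (A B : IR) (F : IR → IR) : ℝ × ℝ :=
  (sInf (Set.range fun P : Partition => (upperSum A B F P).1),
   sInf (Set.range fun P : Partition => (upperSum A B F P).2))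

/-- `F` is bounded on `𝕀_{[A,B]}` (order bounded, equivalently metrically
bounded). -/
def BoundedOn (F : IR → IR) (A B : IR) : Prop :=
  ∃ C D : IR, ∀ X ∈ box A B, C ≤ F X ∧ F X ≤ D

end IR

namespace IR

/-- The left spectrum `F_l(x) = π₁ F([x, ā + ((b̄−ā)/(b̲−a̲))(x−a̲)])`. -/
noncomputable def specL (A B : IR) (F : IR → IR) (x : ℝ) : ℝ :=
  lo (F (mkI x (hi A + ((hi B - hi A) / (lo B - lo A)) * (x - lo A))))

/-- The right spectrum `F_r(x) = π₂ F([x, ā + ((b̄−ā)/(b̲−a̲))(x−a̲)])`. -/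
noncomputable def specR (A B : IR) (F : IR → IR) (x : ℝ) : ℝ :=
  hi (F (mkI x (hi A + ((hi B - hi A) / (lo B - lo A)) * (x - lo A))))

end IR

namespace IR

lemma lo_le_hi (X : IR) : lo X ≤ hi X := X.prop

lemma le_iff {X Y : IR} : X ≤ Y ↔ lo X ≤ lo Y ∧ hi X ≤ hi Y := by
  rw [← Subtype.coe_le_coe, Prod.le_def]; rfl

lemma dist_eq' (X Y : IR) : dist X Y = max |lo X - lo Y| |hi X - hi Y| := by
  rw [Subtype.dist_eq, Prod.dist_eq, Real.dist_eq, Real.dist_eq]; rfl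

lemma dM_eq_dist (X Y : IR) : dM X Y = dist X Y := by
  simp [dM, dist_eq', abs_sub_comm]

section Main

variable {A B : IR}

lemma dM_of_sll (h : sll A B) : dM A B = max (lo B - lo A) (hi B - hi A) := by
  rw [dM, abs_of_pos (sub_pos.2 h.1), abs_of_pos (sub_pos.2 h.2)]

lemma dM_pos (h : sll A B) : 0 < dM A B := by
  rw [dM_of_sll h]; exact lt_max_of_lt_left (sub_pos.2 h.1)

lemma seg_coe {t : ℝ} (ht : t ∈ Set.Icc (0:ℝ) 1) :
    (seg A B t).val = (lo A + t * (lo B - lo A), hi A + t * (hi B - hi A)) := by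
  have hv : lo A + t * (lo B - lo A) ≤ hi A + t * (hi B - hi A) := by
    nlinarith [lo_le_hi A, lo_le_hi B, ht.1, ht.2]
  rw [seg, mkI, dif_pos hv]

lemma seg_lo {t : ℝ} (ht : t ∈ Set.Icc (0:ℝ) 1) :
    lo (seg A B t) = lo A + t * (lo B - lo A) := by rw [lo, seg_coe ht]

lemma seg_hi {t : ℝ} (ht : t ∈ Set.Icc (0:ℝ) 1) :
    hi (seg A B t) = hi A + t * (hi B - hi A) := by rw [hi, seg_coe ht]

lemma seg_zero : seg A B 0 = A := by
  apply Subtype.ext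
  rw [seg_coe (Set.left_mem_Icc.2 zero_le_one)]
  simp [lo, hi]

lemma seg_one : seg A B 1 = B := by
  apply Subtype.ext
  rw [seg_coe (Set.right_mem_Icc.2 zero_le_one)]
  simp [lo, hi, Prod.ext_iff]

lemma seg_mono (h : sll A B) {t s : ℝ} (ht : t ∈ Set.Icc (0:ℝ) 1)
    (hs : s ∈ Set.Icc (0:ℝ) 1) (hts : t ≤ s) : seg A B t ≤ seg A B s := by
  rw [le_iff, seg_lo ht, seg_lo hs, seg_hi ht, seg_hi hs]
  constructor <;> nlinarith [h.1, h.2]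

lemma seg_mem_box (h : sll A B) {t : ℝ} (ht : t ∈ Set.Icc (0:ℝ) 1) :
    seg A B t ∈ box A B := by
  constructor
  · have := seg_mono h (Set.left_mem_Icc.2 zero_le_one) ht ht.1
    rwa [seg_zero] at this
  · have := seg_mono h ht (Set.right_mem_Icc.2 zero_le_one) ht.2
    rwa [seg_one] at this

lemma dist_seg (h : sll A B) {t s : ℝ} (ht : t ∈ Set.Icc (0:ℝ) 1)
    (hs : s ∈ Set.Icc (0:ℝ) 1) (hts : t ≤ s) :
    dist (seg A B t) (seg A B s) = (s - t) * dM A B := by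
  rw [dist_eq', seg_lo ht, seg_lo hs, seg_hi ht, seg_hi hs, dM_of_sll h]
  have e1 : lo A + t * (lo B - lo A) - (lo A + s * (lo B - lo A))
      = -((s - t) * (lo B - lo A)) := by ring
  have e2 : hi A + t * (hi B - hi A) - (hi A + s * (hi B - hi A))
      = -((s - t) * (hi B - hi A)) := by ring
  rw [e1, e2, abs_neg, abs_neg,
    abs_of_nonneg (by nlinarith [h.1] : (0:ℝ) ≤ (s - t) * (lo B - lo A)),
    abs_of_nonneg (by nlinarith [h.2] : (0:ℝ) ≤ (s - t) * (hi B - hi A))]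
  rcases le_total (lo B - lo A) (hi B - hi A) with hc | hc
  · rw [max_eq_right hc, max_eq_right (by nlinarith)]
  · rw [max_eq_left hc, max_eq_left (by nlinarith)]

lemma dist_le_of_mem_box {P Q X Y : IR} (hPQ : P ≤ Q) (hX : X ∈ box P Q)
    (hY : Y ∈ box P Q) : dist X Y ≤ dist P Q := by
  obtain ⟨hX1, hX2⟩ := hX
  obtain ⟨hY1, hY2⟩ := hY
  rw [le_iff] at hX1 hX2 hY1 hY2 hPQ
  rw [dist_eq', dist_eq']
  have e1 : |lo P - lo Q| = lo Q - lo P := by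
    rw [abs_sub_comm, abs_of_nonneg (sub_nonneg.2 hPQ.1)]
  have e2 : |hi P - hi Q| = hi Q - hi P := by
    rw [abs_sub_comm, abs_of_nonneg (sub_nonneg.2 hPQ.2)]
  rw [e1, e2]
  have f1 : |lo X - lo Y| ≤ lo Q - lo P := by
    rw [abs_le]; constructor <;> linarith [hX1.1, hX2.1, hY1.1, hY2.1]
  have f2 : |hi X - hi Y| ≤ hi Q - hi P := by
    rw [abs_le]; constructor <;> linarith [hX1.2, hX2.2, hY1.2, hY2.2]
  exact max_le_max f1 f2

lemma box_seg_subset (h : sll A B) {a b : ℝ} (ha : a ∈ Set.Icc (0:ℝ) 1)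
    (hb : b ∈ Set.Icc (0:ℝ) 1) : box (seg A B a) (seg A B b) ⊆ box A B := fun X hX =>
  ⟨le_trans (seg_mem_box h ha).1 hX.1, le_trans hX.2 (seg_mem_box h hb).2⟩

lemma isCompact_box (P Q : IR) : IsCompact (box P Q) := by
  rw [Topology.IsEmbedding.subtypeVal.isCompact_iff]
  have himg : Subtype.val '' box P Q = Set.Icc P.val Q.val ∩ {p : ℝ × ℝ | p.1 ≤ p.2} := by
    ext p
    constructor
    · rintro ⟨X, ⟨h1, h2⟩, rfl⟩
      exact ⟨⟨h1, h2⟩, X.prop⟩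
    · rintro ⟨⟨h1, h2⟩, hp⟩
      exact ⟨⟨p, hp⟩, ⟨h1, h2⟩, rfl⟩
  rw [himg]
  exact isCompact_Icc.inter_right (isClosed_le continuous_fst continuous_snd)

lemma continuousOn_seg : ContinuousOn (seg A B) (Set.Icc (0:ℝ) 1) := by
  rw [continuousOn_iff_continuous_restrict]
  have hp : ∀ t : Set.Icc (0:ℝ) 1,
      lo A + t.val * (lo B - lo A) ≤ hi A + t.val * (hi B - hi A) :=
    fun t => by nlinarith [lo_le_hi A, lo_le_hi B, t.prop.1, t.prop.2]
  have hc : Continuous fun t : Set.Icc (0:ℝ) 1 =>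
      (⟨(lo A + t.val * (lo B - lo A), hi A + t.val * (hi B - hi A)), hp t⟩ : IR) := by
    apply Continuous.subtype_mk
    exact (continuous_const.add (continuous_subtype_val.mul continuous_const)).prodMk
      (continuous_const.add (continuous_subtype_val.mul continuous_const))
  convert hc using 1
  funext t
  exact Subtype.ext (seg_coe t.prop)

lemma Partition.t_le (P : Partition) : ∀ {i j : ℕ}, i ≤ j → j ≤ P.n → P.t i ≤ P.t j := by
  intro i j hij hj
  induction j with
  | zero => obtain rfl : i = 0 := Nat.le_zero.1 hij; exact le_rfl
  | succ k ih =>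
    rcases Nat.eq_or_lt_of_le hij with rfl | hlt
    · exact le_rfl
    · exact (ih (Nat.lt_succ_iff.1 hlt) (by omega)).trans (P.mono k (by omega)).le

lemma Partition.t_mem (P : Partition) {i : ℕ} (hi : i ≤ P.n) : P.t i ∈ Set.Icc (0:ℝ) 1 := by
  constructor
  · rw [← P.t0]; exact P.t_le (Nat.zero_le i) hi
  · rw [← P.tn]; exact P.t_le hi le_rfl

/-- The trivial partition `0 < 1`. -/
noncomputable def onePart : Partition :=
  ⟨1, one_pos, fun i => if i = 0 then 0 else 1, by simp, by simp, fun i hi => by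
    interval_cases i; norm_num⟩

instance : Nonempty Partition := ⟨onePart⟩

/-- The uniform partition with `n` pieces. -/
noncomputable def unifPart (n : ℕ) (hn : 0 < n) : Partition :=
  ⟨n, hn, fun i => (i : ℝ) / n, by simp, by field_simp, fun i hi => by
    have hn' : (0:ℝ) < n := Nat.cast_pos.2 hn
    rw [div_lt_div_iff_of_pos_right hn']
    exact_mod_cast Nat.lt_succ_self i⟩

section Key

variable (h : sll A B) (f : IR → ℝ) (hf : ContinuousOn f (box A B))

lemma bddBelow_image (C : ℝ) (hC : ∀ X ∈ box A B, ‖f X‖ ≤ C) {S : Set IR}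
    (hS : S ⊆ box A B) : BddBelow (f '' S) := by
  refine ⟨-C, ?_⟩
  rintro y ⟨X, hX, rfl⟩
  have := hC X (hS hX)
  rw [Real.norm_eq_abs] at this
  linarith [neg_abs_le (f X)]

lemma bddAbove_image (C : ℝ) (hC : ∀ X ∈ box A B, ‖f X‖ ≤ C) {S : Set IR}
    (hS : S ⊆ box A B) : BddAbove (f '' S) := by
  refine ⟨C, ?_⟩
  rintro y ⟨X, hX, rfl⟩
  have := hC X (hS hX)
  rw [Real.norm_eq_abs] at this
  linarith [le_abs_self (f X)]

include h

lemma seg_mem_boxk (P : Partition) {k : ℕ} (hk : k < P.n) {t : ℝ}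
    (ht : t ∈ Set.Icc (P.t k) (P.t (k+1))) :
    seg A B t ∈ box (seg A B (P.t k)) (seg A B (P.t (k+1))) := by
  have ha := P.t_mem hk.le
  have hb := P.t_mem (show k + 1 ≤ P.n from hk)
  have htI : t ∈ Set.Icc (0:ℝ) 1 := ⟨le_trans ha.1 ht.1, le_trans ht.2 hb.2⟩
  exact ⟨seg_mono h ha htI ht.1, seg_mono h htI hb ht.2⟩

include hf

lemma continuousOn_fseg : ContinuousOn (fun t => f (seg A B t)) (Set.Icc (0:ℝ) 1) :=
  hf.comp continuousOn_seg fun _ ht => seg_mem_box h ht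

lemma integrable_fseg {a b : ℝ} (ha : a ∈ Set.Icc (0:ℝ) 1) (hb : b ∈ Set.Icc (0:ℝ) 1) :
    IntervalIntegrable (fun t => f (seg A B t)) MeasureTheory.volume a b := by
  apply ContinuousOn.intervalIntegrable
  apply (continuousOn_fseg h f hf).mono
  rw [← Set.uIcc_of_le (zero_le_one (α := ℝ))]
  exact Set.uIcc_subset_uIcc (by rwa [Set.uIcc_of_le (zero_le_one (α := ℝ))])
    (by rwa [Set.uIcc_of_le (zero_le_one (α := ℝ))])

lemma splitInt (P : Partition) :
    dM A B * ∫ t in (0:ℝ)..1, f (seg A B t) =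
    ∑ k ∈ Finset.range P.n, dM A B * ∫ t in (P.t k)..(P.t (k+1)), f (seg A B t) := by
  rw [← Finset.mul_sum]
  congr 1
  rw [intervalIntegral.sum_integral_adjacent_intervals
    (fun k hk => integrable_fseg h f hf (P.t_mem hk.le) (P.t_mem hk)), P.t0, P.tn]

lemma lsum_le (P : Partition) :
    ∑ k ∈ Finset.range P.n, dM (seg A B (P.t k)) (seg A B (P.t (k+1))) *
      sInf (f '' box (seg A B (P.t k)) (seg A B (P.t (k+1)))) ≤
    dM A B * ∫ t in (0:ℝ)..1, f (seg A B t) := by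
  obtain ⟨C, hC⟩ := (isCompact_box A B).exists_bound_of_continuousOn hf
  rw [splitInt h f hf P]
  apply Finset.sum_le_sum
  intro k hk
  rw [Finset.mem_range] at hk
  have ha := P.t_mem hk.le
  have hb := P.t_mem (show k + 1 ≤ P.n from hk)
  have hab : P.t k ≤ P.t (k+1) := (P.mono k hk).le
  rw [dM_eq_dist (seg A B (P.t k)) (seg A B (P.t (k+1))), dist_seg h ha hb hab]
  have step : (P.t (k+1) - P.t k) *
      sInf (f '' box (seg A B (P.t k)) (seg A B (P.t (k+1)))) ≤
      ∫ t in (P.t k)..(P.t (k+1)), f (seg A B t) := by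
    have := intervalIntegral.integral_mono_on (μ := MeasureTheory.volume) hab
      (intervalIntegrable_const
        (c := sInf (f '' box (seg A B (P.t k)) (seg A B (P.t (k+1))))))
      (integrable_fseg h f hf ha hb)
      (fun t ht => csInf_le
        (bddBelow_image f C hC (box_seg_subset h ha hb))
        ⟨seg A B t, seg_mem_boxk h P hk ht, rfl⟩)
    rwa [intervalIntegral.integral_const, smul_eq_mul] at this
  calc (P.t (k+1) - P.t k) * dM A B *
        sInf (f '' box (seg A B (P.t k)) (seg A B (P.t (k+1))))
      = dM A B * ((P.t (k+1) - P.t k) *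
        sInf (f '' box (seg A B (P.t k)) (seg A B (P.t (k+1))))) := by ring
    _ ≤ _ := mul_le_mul_of_nonneg_left step (dM_pos h).le

lemma le_usum (P : Partition) :
    dM A B * ∫ t in (0:ℝ)..1, f (seg A B t) ≤
    ∑ k ∈ Finset.range P.n, dM (seg A B (P.t k)) (seg A B (P.t (k+1))) *
      sSup (f '' box (seg A B (P.t k)) (seg A B (P.t (k+1)))) := by
  obtain ⟨C, hC⟩ := (isCompact_box A B).exists_bound_of_continuousOn hf
  rw [splitInt h f hf P]
  apply Finset.sum_le_sum
  intro k hk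
  rw [Finset.mem_range] at hk
  have ha := P.t_mem hk.le
  have hb := P.t_mem (show k + 1 ≤ P.n from hk)
  have hab : P.t k ≤ P.t (k+1) := (P.mono k hk).le
  rw [dM_eq_dist (seg A B (P.t k)) (seg A B (P.t (k+1))), dist_seg h ha hb hab]
  have step : (∫ t in (P.t k)..(P.t (k+1)), f (seg A B t)) ≤
      (P.t (k+1) - P.t k) *
      sSup (f '' box (seg A B (P.t k)) (seg A B (P.t (k+1)))) := by
    have := intervalIntegral.integral_mono_on (μ := MeasureTheory.volume) hab
      (integrable_fseg h f hf ha hb)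
      (intervalIntegrable_const
        (c := sSup (f '' box (seg A B (P.t k)) (seg A B (P.t (k+1))))))
      (fun t ht => le_csSup
        (bddAbove_image f C hC (box_seg_subset h ha hb))
        ⟨seg A B t, seg_mem_boxk h P hk ht, rfl⟩)
    rwa [intervalIntegral.integral_const, smul_eq_mul] at this
  calc dM A B * ∫ t in (P.t k)..(P.t (k+1)), f (seg A B t)
      ≤ dM A B * ((P.t (k+1) - P.t k) *
        sSup (f '' box (seg A B (P.t k)) (seg A B (P.t (k+1))))) :=
        mul_le_mul_of_nonneg_left step (dM_pos h).le
    _ = _ := by ring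

lemma exists_good {ε : ℝ} (hε : 0 < ε) : ∃ P : Partition,
    (dM A B * ∫ t in (0:ℝ)..1, f (seg A B t) ≤
      (∑ k ∈ Finset.range P.n, dM (seg A B (P.t k)) (seg A B (P.t (k+1))) *
        sInf (f '' box (seg A B (P.t k)) (seg A B (P.t (k+1))))) + ε) ∧
    ((∑ k ∈ Finset.range P.n, dM (seg A B (P.t k)) (seg A B (P.t (k+1))) *
        sSup (f '' box (seg A B (P.t k)) (seg A B (P.t (k+1))))) ≤
      (dM A B * ∫ t in (0:ℝ)..1, f (seg A B t)) + ε) := by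
  have hD := dM_pos h
  obtain ⟨C, hC⟩ := (isCompact_box A B).exists_bound_of_continuousOn hf
  set ε' := ε / (2 * dM A B) with hε'def
  have hε' : 0 < ε' := div_pos hε (by linarith)
  obtain ⟨δ, hδ, hUC⟩ := Metric.uniformContinuousOn_iff_le.1
    ((isCompact_box A B).uniformContinuousOn_of_continuous hf) ε' hε'
  obtain ⟨n, hn⟩ := exists_nat_gt (dM A B / δ)
  have hn0 : 0 < n := by
    have h0 : (0:ℝ) < n := (div_pos hD hδ).trans hn
    exact_mod_cast h0
  have hn' : (0:ℝ) < n := Nat.cast_pos.2 hn0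
  set P := unifPart n hn0 with hPdef
  have hdelta : dM A B / n ≤ δ := by
    rw [div_lt_iff₀ hδ] at hn
    rw [div_le_iff₀ hn']
    nlinarith
  have hdiff : ∀ k : ℕ, P.t (k+1) - P.t k = 1 / n := by
    intro k
    show ((k+1 : ℕ) : ℝ) / n - ((k : ℕ) : ℝ) / n = 1 / n
    push_cast
    ring
  have hsum1 : ∑ k ∈ Finset.range P.n, (P.t (k+1) - P.t k) = 1 := by
    rw [Finset.sum_range_sub (fun i => P.t i) P.n, P.tn, P.t0, sub_zero]
  have hDε' : dM A B * ε' = ε / 2 := by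
    rw [hε'def]
    field_simp
  have hdistk : ∀ k < P.n, ∀ t ∈ Set.Icc (P.t k) (P.t (k+1)),
      ∀ X ∈ box (seg A B (P.t k)) (seg A B (P.t (k+1))),
      dist (f (seg A B t)) (f X) ≤ ε' := by
    intro k hk t ht X hX
    have ha := P.t_mem hk.le
    have hb := P.t_mem (show k + 1 ≤ P.n from hk)
    have hab : P.t k ≤ P.t (k+1) := (P.mono k hk).le
    apply hUC _ (seg_mem_box h ⟨le_trans ha.1 ht.1, le_trans ht.2 hb.2⟩) _
      (box_seg_subset h ha hb hX)
    calc dist (seg A B t) X ≤ dist (seg A B (P.t k)) (seg A B (P.t (k+1))) :=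
          dist_le_of_mem_box (seg_mono h ha hb hab) (seg_mem_boxk h P hk ht) hX
      _ = (P.t (k+1) - P.t k) * dM A B := dist_seg h ha hb hab
      _ = dM A B / n := by rw [hdiff k]; ring
      _ ≤ δ := hdelta
  refine ⟨P, ?_, ?_⟩
  · rw [splitInt h f hf P]
    have step : ∀ k ∈ Finset.range P.n,
        dM A B * ∫ t in (P.t k)..(P.t (k+1)), f (seg A B t) ≤
        dM (seg A B (P.t k)) (seg A B (P.t (k+1))) *
          sInf (f '' box (seg A B (P.t k)) (seg A B (P.t (k+1)))) +
          dM A B * ε' * (P.t (k+1) - P.t k) := by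
      intro k hk
      rw [Finset.mem_range] at hk
      have ha := P.t_mem hk.le
      have hb := P.t_mem (show k + 1 ≤ P.n from hk)
      have hab : P.t k ≤ P.t (k+1) := (P.mono k hk).le
      rw [dM_eq_dist (seg A B (P.t k)) (seg A B (P.t (k+1))), dist_seg h ha hb hab]
      have hpt : ∀ t ∈ Set.Icc (P.t k) (P.t (k+1)),
          f (seg A B t) ≤
          sInf (f '' box (seg A B (P.t k)) (seg A B (P.t (k+1)))) + ε' := by
        intro t ht
        have hle : f (seg A B t) - ε' ≤
            sInf (f '' box (seg A B (P.t k)) (seg A B (P.t (k+1)))) := by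
          have hne : (f '' box (seg A B (P.t k)) (seg A B (P.t (k+1)))).Nonempty :=
            ⟨f (seg A B (P.t k)),
              ⟨seg A B (P.t k), seg_mem_boxk h P hk (Set.left_mem_Icc.2 hab), rfl⟩⟩
          apply le_csInf hne
          rintro y ⟨X, hX, rfl⟩
          have hd := hdistk k hk t ht X hX
          rw [Real.dist_eq] at hd
          have := abs_le.1 hd
          linarith [this.1, this.2]
        linarith
      have hint : (∫ t in (P.t k)..(P.t (k+1)), f (seg A B t)) ≤
          (P.t (k+1) - P.t k) *
          (sInf (f '' box (seg A B (P.t k)) (seg A B (P.t (k+1)))) + ε') := by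
        have := intervalIntegral.integral_mono_on (μ := MeasureTheory.volume) hab
          (integrable_fseg h f hf ha hb)
          (intervalIntegrable_const
            (c := sInf (f '' box (seg A B (P.t k)) (seg A B (P.t (k+1)))) + ε'))
          hpt
        rwa [intervalIntegral.integral_const, smul_eq_mul] at this
      calc dM A B * ∫ t in (P.t k)..(P.t (k+1)), f (seg A B t)
          ≤ dM A B * ((P.t (k+1) - P.t k) *
            (sInf (f '' box (seg A B (P.t k)) (seg A B (P.t (k+1)))) + ε')) :=
            mul_le_mul_of_nonneg_left hint hD.le
        _ = (P.t (k+1) - P.t k) * dM A B *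
            sInf (f '' box (seg A B (P.t k)) (seg A B (P.t (k+1)))) +
            dM A B * ε' * (P.t (k+1) - P.t k) := by ring
    refine le_trans (Finset.sum_le_sum step) ?_
    rw [Finset.sum_add_distrib, ← Finset.mul_sum, hsum1, mul_one, hDε']
    linarith
  · rw [splitInt h f hf P]
    have step : ∀ k ∈ Finset.range P.n,
        dM (seg A B (P.t k)) (seg A B (P.t (k+1))) *
          sSup (f '' box (seg A B (P.t k)) (seg A B (P.t (k+1)))) ≤
        dM A B * (∫ t in (P.t k)..(P.t (k+1)), f (seg A B t)) +
          dM A B * ε' * (P.t (k+1) - P.t k) := by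
      intro k hk
      rw [Finset.mem_range] at hk
      have ha := P.t_mem hk.le
      have hb := P.t_mem (show k + 1 ≤ P.n from hk)
      have hab : P.t k ≤ P.t (k+1) := (P.mono k hk).le
      rw [dM_eq_dist (seg A B (P.t k)) (seg A B (P.t (k+1))), dist_seg h ha hb hab]
      have hpt : ∀ t ∈ Set.Icc (P.t k) (P.t (k+1)),
          sSup (f '' box (seg A B (P.t k)) (seg A B (P.t (k+1)))) - ε' ≤
          f (seg A B t) := by
        intro t ht
        have hle : sSup (f '' box (seg A B (P.t k)) (seg A B (P.t (k+1)))) ≤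
            f (seg A B t) + ε' := by
          have hne : (f '' box (seg A B (P.t k)) (seg A B (P.t (k+1)))).Nonempty :=
            ⟨f (seg A B (P.t k)),
              ⟨seg A B (P.t k), seg_mem_boxk h P hk (Set.left_mem_Icc.2 hab), rfl⟩⟩
          apply csSup_le hne
          rintro y ⟨X, hX, rfl⟩
          have hd := hdistk k hk t ht X hX
          rw [Real.dist_eq] at hd
          have := abs_le.1 hd
          linarith [this.1, this.2]
        linarith
      have hint : (P.t (k+1) - P.t k) *
          (sSup (f '' box (seg A B (P.t k)) (seg A B (P.t (k+1)))) - ε') ≤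
          ∫ t in (P.t k)..(P.t (k+1)), f (seg A B t) := by
        have := intervalIntegral.integral_mono_on (μ := MeasureTheory.volume) hab
          (intervalIntegrable_const
            (c := sSup (f '' box (seg A B (P.t k)) (seg A B (P.t (k+1)))) - ε'))
          (integrable_fseg h f hf ha hb)
          hpt
        rwa [intervalIntegral.integral_const, smul_eq_mul] at this
      have := mul_le_mul_of_nonneg_left hint hD.le
      nlinarith [this]
    refine le_trans (Finset.sum_le_sum step) ?_
    rw [Finset.sum_add_distrib, ← Finset.mul_sum, ← Finset.mul_sum, hsum1, mul_one, hDε']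
    linarith

lemma lowerKey :
    sSup (Set.range fun P : Partition =>
      ∑ k ∈ Finset.range P.n, dM (seg A B (P.t k)) (seg A B (P.t (k+1))) *
        sInf (f '' box (seg A B (P.t k)) (seg A B (P.t (k+1))))) =
    dM A B * ∫ t in (0:ℝ)..1, f (seg A B t) := by
  have hbdd : BddAbove (Set.range fun P : Partition =>
      ∑ k ∈ Finset.range P.n, dM (seg A B (P.t k)) (seg A B (P.t (k+1))) *
        sInf (f '' box (seg A B (P.t k)) (seg A B (P.t (k+1))))) := by
    refine ⟨dM A B * ∫ t in (0:ℝ)..1, f (seg A B t), ?_⟩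
    rintro x ⟨P, rfl⟩
    exact lsum_le h f hf P
  apply le_antisymm
  · apply csSup_le (Set.range_nonempty _)
    rintro x ⟨P, rfl⟩
    exact lsum_le h f hf P
  · apply le_of_forall_pos_le_add
    intro ε hε
    obtain ⟨P, hP1, _⟩ := exists_good h f hf hε
    exact hP1.trans (add_le_add_left (le_csSup hbdd ⟨P, rfl⟩) ε)

lemma upperKey :
    sInf (Set.range fun P : Partition =>
      ∑ k ∈ Finset.range P.n, dM (seg A B (P.t k)) (seg A B (P.t (k+1))) *
        sSup (f '' box (seg A B (P.t k)) (seg A B (P.t (k+1))))) =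
    dM A B * ∫ t in (0:ℝ)..1, f (seg A B t) := by
  have hbdd : BddBelow (Set.range fun P : Partition =>
      ∑ k ∈ Finset.range P.n, dM (seg A B (P.t k)) (seg A B (P.t (k+1))) *
        sSup (f '' box (seg A B (P.t k)) (seg A B (P.t (k+1))))) := by
    refine ⟨dM A B * ∫ t in (0:ℝ)..1, f (seg A B t), ?_⟩
    rintro x ⟨P, rfl⟩
    exact le_usum h f hf P
  apply le_antisymm
  · apply le_of_forall_pos_le_add
    intro ε hε
    obtain ⟨P, _, hP2⟩ := exists_good h f hf hε
    exact le_trans (csInf_le hbdd ⟨P, rfl⟩) hP2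
  · apply le_csInf (Set.range_nonempty _)
    rintro x ⟨P, rfl⟩
    exact le_usum h f hf P

end Key

end Main

end IR

open IR in
/-- **Characterization theorem.**  Let `A ≪ B` and `F : 𝕀_{[A,B]} → 𝕀ℝ` be
continuous w.r.t. the Moore metric.  Then `F` is integrable
(`∫̲_A^B F = ∫̄_A^B F`) and
`∫_A^B F = [∫_{a̲}^{b̲} F_l, ∫_{a̲}^{b̲} F_r] · (d_M(A,B)/(b̲−a̲))`. -/
theorem IR.characterization (A B : IR) (h : sll A B) (F : IR → IR)
    (hF : ContinuousOn F (box A B)) :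
    lowerInt A B F = upperInt A B F ∧
    lowerInt A B F =
      (dM A B / (lo B - lo A)) •
        ((∫ x in lo A..lo B, specL A B F x), (∫ x in lo A..lo B, specR A B F x)) := by
  have hfL : ContinuousOn (fun X => lo (F X)) (box A B) :=
    (continuous_fst.comp continuous_subtype_val).comp_continuousOn hF
  have hfR : ContinuousOn (fun X => hi (F X)) (box A B) :=
    (continuous_snd.comp continuous_subtype_val).comp_continuousOn hF
  have eL : (fun P : Partition => (lowerSum A B F P).1) = fun P : Partition =>
      ∑ k ∈ Finset.range P.n, dM (seg A B (P.t k)) (seg A B (P.t (k+1))) *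
        sInf ((fun X => lo (F X)) '' box (seg A B (P.t k)) (seg A B (P.t (k+1)))) := by
    funext P
    simp only [lowerSum, Prod.fst_sum, Prod.smul_fst, infS, smul_eq_mul, Set.image_image]
  have eR : (fun P : Partition => (lowerSum A B F P).2) = fun P : Partition =>
      ∑ k ∈ Finset.range P.n, dM (seg A B (P.t k)) (seg A B (P.t (k+1))) *
        sInf ((fun X => hi (F X)) '' box (seg A B (P.t k)) (seg A B (P.t (k+1)))) := by
    funext P
    simp only [lowerSum, Prod.snd_sum, Prod.smul_snd, infS, smul_eq_mul, Set.image_image]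
  have uL : (fun P : Partition => (upperSum A B F P).1) = fun P : Partition =>
      ∑ k ∈ Finset.range P.n, dM (seg A B (P.t k)) (seg A B (P.t (k+1))) *
        sSup ((fun X => lo (F X)) '' box (seg A B (P.t k)) (seg A B (P.t (k+1)))) := by
    funext P
    simp only [upperSum, Prod.fst_sum, Prod.smul_fst, supS, smul_eq_mul, Set.image_image]
  have uR : (fun P : Partition => (upperSum A B F P).2) = fun P : Partition =>
      ∑ k ∈ Finset.range P.n, dM (seg A B (P.t k)) (seg A B (P.t (k+1))) *
        sSup ((fun X => hi (F X)) '' box (seg A B (P.t k)) (seg A B (P.t (k+1)))) := by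
    funext P
    simp only [upperSum, Prod.snd_sum, Prod.smul_snd, supS, smul_eq_mul, Set.image_image]
  have hL1 : (lowerInt A B F).1 = dM A B * ∫ t in (0:ℝ)..1, lo (F (seg A B t)) := by
    show sSup _ = _
    rw [eL]
    exact lowerKey h _ hfL
  have hL2 : (lowerInt A B F).2 = dM A B * ∫ t in (0:ℝ)..1, hi (F (seg A B t)) := by
    show sSup _ = _
    rw [eR]
    exact lowerKey h _ hfR
  have hU1 : (upperInt A B F).1 = dM A B * ∫ t in (0:ℝ)..1, lo (F (seg A B t)) := by
    show sInf _ = _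
    rw [uL]
    exact upperKey h _ hfL
  have hU2 : (upperInt A B F).2 = dM A B * ∫ t in (0:ℝ)..1, hi (F (seg A B t)) := by
    show sInf _ = _
    rw [uR]
    exact upperKey h _ hfR
  have hdl : lo B - lo A ≠ 0 := ne_of_gt (sub_pos.2 h.1)
  have hspecL : ∀ t : ℝ, specL A B F ((lo B - lo A) * t + lo A) = lo (F (seg A B t)) := by
    intro t
    rw [specL]
    have e1 : (lo B - lo A) * t + lo A = lo A + t * (lo B - lo A) := by ring
    rw [e1]
    have e2 : hi A + (hi B - hi A) / (lo B - lo A) * (lo A + t * (lo B - lo A) - lo A)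
        = hi A + t * (hi B - hi A) := by field_simp; ring
    rw [e2]
    rfl
  have hspecR : ∀ t : ℝ, specR A B F ((lo B - lo A) * t + lo A) = hi (F (seg A B t)) := by
    intro t
    rw [specR]
    have e1 : (lo B - lo A) * t + lo A = lo A + t * (lo B - lo A) := by ring
    rw [e1]
    have e2 : hi A + (hi B - hi A) / (lo B - lo A) * (lo A + t * (lo B - lo A) - lo A)
        = hi A + t * (hi B - hi A) := by field_simp; ring
    rw [e2]
    rfl
  have intL : ∫ t in (0:ℝ)..1, lo (F (seg A B t))
      = (lo B - lo A)⁻¹ * ∫ x in lo A..lo B, specL A B F x := by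
    have e0 : (lo B - lo A) * 0 + lo A = lo A := by ring
    have e1 : (lo B - lo A) * 1 + lo A = lo B := by ring
    calc ∫ t in (0:ℝ)..1, lo (F (seg A B t))
        = ∫ t in (0:ℝ)..1, specL A B F ((lo B - lo A) * t + lo A) :=
          intervalIntegral.integral_congr (fun t _ => (hspecL t).symm)
      _ = (lo B - lo A)⁻¹ • ∫ x in ((lo B - lo A) * 0 + lo A)..((lo B - lo A) * 1 + lo A),
            specL A B F x := intervalIntegral.integral_comp_mul_add _ hdl _
      _ = (lo B - lo A)⁻¹ * ∫ x in lo A..lo B, specL A B F x := by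
          rw [e0, e1, smul_eq_mul]
  have intR : ∫ t in (0:ℝ)..1, hi (F (seg A B t))
      = (lo B - lo A)⁻¹ * ∫ x in lo A..lo B, specR A B F x := by
    have e0 : (lo B - lo A) * 0 + lo A = lo A := by ring
    have e1 : (lo B - lo A) * 1 + lo A = lo B := by ring
    calc ∫ t in (0:ℝ)..1, hi (F (seg A B t))
        = ∫ t in (0:ℝ)..1, specR A B F ((lo B - lo A) * t + lo A) :=
          intervalIntegral.integral_congr (fun t _ => (hspecR t).symm)
      _ = (lo B - lo A)⁻¹ • ∫ x in ((lo B - lo A) * 0 + lo A)..((lo B - lo A) * 1 + lo A),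
            specR A B F x := intervalIntegral.integral_comp_mul_add _ hdl _
      _ = (lo B - lo A)⁻¹ * ∫ x in lo A..lo B, specR A B F x := by
          rw [e0, e1, smul_eq_mul]
  constructor
  · rw [Prod.ext_iff]
    exact ⟨hL1.trans hU1.symm, hL2.trans hU2.symm⟩
  · rw [Prod.ext_iff]
    constructor
    · rw [hL1, intL]
      show _ = dM A B / (lo B - lo A) * ∫ x in lo A..lo B, specL A B F x
      rw [div_eq_mul_inv]
      ring
    · rw [hL2, intR]
      show _ = dM A B / (lo B - lo A) * ∫ x in lo A..lo B, specR A B F x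
      rw [div_eq_mul_inv]
      ring
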